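/- Let M_1, ..., M_m be real symmetric n×n matrices, b ∈ ℝ^m, and let Y⋆ ∈ ℝ^{n×n} be a positive semi-definite matrix with ⟨M_i, Y⋆⟩ = b_i for all i. Suppose there exists φ ∈ ℝ^m with Σ_{i=1}^m φ_i M_i = I_n (the n×n identity matrix), and suppose Y⋆ is the unique minimizer of the nuclear norm over the affine set {Y ∈ ℝ^{n×n} : ⟨M_i, Y⟩ = b_i for all i}. Then {Y ∈ ℝ^{n×n} : ⟨M_i, Y⟩ = b_i for all i, Y ⪰ 0} = {Y⋆}. -/

import Mathlib

open Matrix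

/-- The nuclear norm of a real square matrix: the trace of `√(Yᴴ Y)`
(for real matrices, `Yᴴ = Yᵀ`), i.e. the sum of the singular values. -/
noncomputable def nuclearNorm {n : ℕ} (Y : Matrix (Fin n) (Fin n) ℝ) : ℝ :=
  (let hA := Matrix.posSemidef_conjTranspose_mul_self Y
   hA.1.eigenvectorUnitary.1 * diagonal (Real.sqrt ∘ hA.1.eigenvalues) *
     (star hA.1.eigenvectorUnitary : Matrix (Fin n) (Fin n) ℝ)).trace

lemma nuclearNorm_of_posSemidef {n : ℕ} {Y : Matrix (Fin n) (Fin n) ℝ}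
    (hY : Y.PosSemidef) : nuclearNorm Y = Y.trace := by
  have h : Y = cfc Real.sqrt (Yᴴ * Y) := by
    have hsa : IsSelfAdjoint Y := hY.1
    rw [hY.1.eq, ← pow_two, ← cfc_comp_pow Real.sqrt 2 Y (ha := hsa), cfc_congr (g := id), cfc_id ℝ Y]
    intro x hx
    rw [hY.1.spectrum_real_eq_range_eigenvalues] at hx
    obtain ⟨i, rfl⟩ := hx
    exact Real.sqrt_sq (hY.eigenvalues_nonneg i)
  rw [(Matrix.posSemidef_conjTranspose_mul_self Y).1.cfc_eq] at h
  rw [nuclearNorm]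
  conv_rhs => rw [h]
  rfl

/-- If the symmetric sensing matrices `M i` satisfy `∑ φ i • M i = I`, `Y⋆ ⪰ 0` fits
the measurements `b`, and `Y⋆` is the unique nuclear-norm minimizer over the affine set
`{Y | ⟨Mᵢ, Y⟩ = bᵢ for all i}`, then the PSD feasibility set is exactly `{Y⋆}`. -/
theorem psd_feasible_set_singleton_identity_span
    {n m : ℕ}
    (M : Fin m → Matrix (Fin n) (Fin n) ℝ)
    (hMsymm : ∀ i, (M i).IsSymm)
    (b : Fin m → ℝ)
    (Ystar : Matrix (Fin n) (Fin n) ℝ)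
    (hYstarPSD : Ystar.PosSemidef)
    (hYstarFit : ∀ i, ((M i)ᵀ * Ystar).trace = b i)
    (φ : Fin m → ℝ)
    (hsum : ∑ i, φ i • M i = (1 : Matrix (Fin n) (Fin n) ℝ))
    (hYstarUnique : ∀ Y : Matrix (Fin n) (Fin n) ℝ,
      (∀ i, ((M i)ᵀ * Y).trace = b i) → Y ≠ Ystar →
        nuclearNorm Ystar < nuclearNorm Y) :
    {Y : Matrix (Fin n) (Fin n) ℝ |
      (∀ i, ((M i)ᵀ * Y).trace = b i) ∧ Y.PosSemidef} = {Ystar} := by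
  have htr : ∀ Y : Matrix (Fin n) (Fin n) ℝ,
      (∀ i, ((M i)ᵀ * Y).trace = b i) → Y.trace = ∑ i, φ i * b i := by
    intro Y hY
    have : ((∑ i, φ i • M i)ᵀ * Y).trace = Y.trace := by
      rw [hsum]; simp
    rw [← this]
    simp only [Matrix.transpose_sum, Matrix.transpose_smul, Finset.sum_mul,
      Matrix.sum_mul, Matrix.trace_sum, Matrix.smul_mul, Matrix.trace_smul]
    exact Finset.sum_congr rfl fun i _ => by rw [hY i]; simp [smul_eq_mul]
  ext Y
  simp only [Set.mem_setOf_eq, Set.mem_singleton_iff]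
  constructor
  · rintro ⟨hfit, hpsd⟩
    by_contra hne
    have := hYstarUnique Y hfit hne
    rw [nuclearNorm_of_posSemidef hpsd, nuclearNorm_of_posSemidef hYstarPSD,
      htr Y hfit, htr Ystar hYstarFit] at this
    exact lt_irrefl _ this
  · rintro rfl
    exact ⟨hYstarFit, hYstarPSD⟩
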